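/- Let α : [0,∞) → (0,1) be continuous, let t > 0, let n ≥ 1 be an integer, and let λ > 0. Then ∑_{r=1}^∞ ((−1)^{n+r}/r!) ∫_{[0,t]^r} λ^{β_r(s₁,…,s_r)} binom(β_r(s₁,…,s_r), n) ds₁⋯ds_r = ((−λ)^n / n!) · (d^n/dλ^n) exp(−∫_0^t λ^{α(τ)} dτ), where the n-th derivative is taken with respect to λ at the point λ. -/

import Mathlib

open MeasureTheory

/-- Generalized binomial coefficient `binom(x, n) = (∏_{j=0}^{n-1} (x - j)) / n!`. -/
noncomputable def gbinom (x : ℝ) (n : ℕ) : ℝ :=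
  (∏ j ∈ Finset.range n, (x - (j : ℝ))) / (n.factorial : ℝ)

/-- `β_r(s₁, …, s_r) = ∑_{j=1}^r α(s_j)`. -/
noncomputable def betaSum (α : ℝ → ℝ) {r : ℕ} (s : Fin r → ℝ) : ℝ :=
  ∑ j, α (s j)

/-- descending product `∏_{j<m} (x - j)` -/
noncomputable def descP (m : ℕ) (x : ℝ) : ℝ := ∏ j ∈ Finset.range m, (x - (j : ℝ))

lemma descP_succ (m : ℕ) (x : ℝ) : descP (m + 1) x = descP m x * (x - m) := by
  simp [descP, Finset.prod_range_succ]

lemma descP_zero (x : ℝ) : descP 0 x = 1 := by simp [descP]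

lemma abs_descP_le {m : ℕ} {x D : ℝ} (h0 : 0 ≤ x) (hD : x ≤ D) (hmD : (m : ℝ) ≤ D) :
    |descP m x| ≤ D ^ m := by
  have : |descP m x| = ∏ j ∈ Finset.range m, |x - (j : ℝ)| := by
    simp [descP, Finset.abs_prod]
  rw [this]
  calc ∏ j ∈ Finset.range m, |x - (j : ℝ)| ≤ ∏ j ∈ Finset.range m, D := by
        refine Finset.prod_le_prod (fun j _ => abs_nonneg _) (fun j hj => ?_)
        rw [Finset.mem_range] at hj
        have hj' : (j : ℝ) ≤ D := le_trans (by exact_mod_cast Nat.le_of_lt_succ (Nat.lt_succ_of_lt hj)) hmD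
        rw [abs_le]
        constructor <;> nlinarith
    _ = D ^ m := by simp

/-- key pointwise bound for powers: if `x, x⁻¹ ≤ B`, `1 ≤ B`, `|e| ≤ E` then `x ^ e ≤ B ^ E`. -/
lemma rpow_le_of_abs_le {x B e E : ℝ} (hx : 0 < x) (hB : 1 ≤ B) (hxB : x ≤ B)
    (hxB' : x⁻¹ ≤ B) (he : |e| ≤ E) : x ^ e ≤ B ^ E := by
  rcases le_or_gt 0 e with h | h
  · calc x ^ e ≤ B ^ e := Real.rpow_le_rpow hx.le hxB h
      _ ≤ B ^ E := Real.rpow_le_rpow_of_exponent_le hB ((le_abs_self e).trans he)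
  · have hx' : x ^ e = (x⁻¹) ^ (-e) := by
      rw [Real.inv_rpow hx.le, ← Real.rpow_neg hx.le, neg_neg]
    rw [hx']
    have hxi : 0 < x⁻¹ := inv_pos.2 hx
    calc (x⁻¹) ^ (-e) ≤ B ^ (-e) := Real.rpow_le_rpow hxi.le hxB' (by linarith)
      _ ≤ B ^ E := Real.rpow_le_rpow_of_exponent_le hB ((neg_le_abs e).trans he)

noncomputable def gInt (α : ℝ → ℝ) (t : ℝ) (r m : ℕ) (l : ℝ) : ℝ :=
  ∫ s : Fin (r+1) → ℝ in Set.univ.pi fun _ => Set.Icc (0:ℝ) t,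
    descP m (betaSum α s) * l ^ (betaSum α s - m)

section main

variable {α : ℝ → ℝ} {t : ℝ}

lemma measK (r : ℕ) : MeasurableSet (Set.univ.pi fun _ : Fin (r+1) => Set.Icc (0:ℝ) t) :=
  MeasurableSet.univ_pi fun _ => measurableSet_Icc

lemma compK (r : ℕ) : IsCompact (Set.univ.pi fun _ : Fin (r+1) => Set.Icc (0:ℝ) t) :=
  isCompact_univ_pi fun _ => isCompact_Icc

lemma betaSum_pos (hα : ∀ s ∈ Set.Ici (0 : ℝ), α s ∈ Set.Ioo (0 : ℝ) 1) (ht : 0 ≤ t) {r : ℕ}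
    {s : Fin (r+1) → ℝ} (hs : s ∈ Set.univ.pi fun _ => Set.Icc (0:ℝ) t) :
    0 < betaSum α s ∧ betaSum α s < r + 1 := by
  have h : ∀ j : Fin (r+1), α (s j) ∈ Set.Ioo (0:ℝ) 1 := fun j =>
    hα _ (hs j trivial).1
  constructor
  · exact Finset.sum_pos (fun j _ => (h j).1) ⟨0, Finset.mem_univ 0⟩
  · calc betaSum α s < ∑ _j : Fin (r+1), (1:ℝ) :=
        Finset.sum_lt_sum_of_nonempty ⟨0, Finset.mem_univ 0⟩ (fun j _ => (h j).2)
      _ = r + 1 := by simp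

lemma betaSum_contOn (hαc : ContinuousOn α (Set.Ici 0)) (ht : 0 ≤ t) (r : ℕ) :
    ContinuousOn (betaSum α (r := r+1)) (Set.univ.pi fun _ => Set.Icc (0:ℝ) t) := by
  apply continuousOn_finset_sum
  intro j _
  apply hαc.comp (continuous_apply j).continuousOn
  intro s hs
  exact (hs j trivial).1

lemma integrand_contOn (hαc : ContinuousOn α (Set.Ici 0)) (ht : 0 ≤ t) {l : ℝ} (hl : 0 < l)
    (r m : ℕ) :
    ContinuousOn (fun s : Fin (r+1) → ℝ => descP m (betaSum α s) * l ^ (betaSum α s - m))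
      (Set.univ.pi fun _ => Set.Icc (0:ℝ) t) := by
  have hβ := betaSum_contOn hαc ht r
  have h1 : ContinuousOn (fun s : Fin (r+1) → ℝ => descP m (betaSum α s))
      (Set.univ.pi fun _ => Set.Icc (0:ℝ) t) := by
    have hP : Continuous (descP m) := continuous_finset_prod _ fun j _ => by continuity
    exact hP.comp_continuousOn hβ
  refine h1.mul ?_
  have hc : Continuous (fun y : ℝ => l ^ y) := by
    have : (fun y : ℝ => l ^ y) = fun y => Real.exp (Real.log l * y) := by
      funext y; rw [Real.rpow_def_of_pos hl]
    rw [this]; continuity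
  exact hc.comp_continuousOn (hβ.sub continuousOn_const)

lemma integrand_bound (hα : ∀ s ∈ Set.Ici (0 : ℝ), α s ∈ Set.Ioo (0 : ℝ) 1) (ht : 0 ≤ t)
    {r m n : ℕ} (hmn : m ≤ n) {x B : ℝ} (hx : 0 < x) (hB : 1 ≤ B) (hxB : x ≤ B)
    (hxB' : x⁻¹ ≤ B) {s : Fin (r+1) → ℝ} (hs : s ∈ Set.univ.pi fun _ => Set.Icc (0:ℝ) t) :
    |descP m (betaSum α s) * x ^ (betaSum α s - m)| ≤
      ((r:ℝ) + 1 + n) ^ n * B ^ ((r:ℝ) + 1 + n) := by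
  obtain ⟨hβ0, hβ1⟩ := betaSum_pos hα ht hs
  set β := betaSum α s with hβ
  have hD1 : (1:ℝ) ≤ (r:ℝ) + 1 + n := by
    have : (0:ℝ) ≤ (r:ℝ) := Nat.cast_nonneg r
    have : (0:ℝ) ≤ (n:ℝ) := Nat.cast_nonneg n
    linarith
  rw [abs_mul]
  have h1 : |descP m β| ≤ ((r:ℝ) + 1 + n) ^ n := by
    calc |descP m β| ≤ ((r:ℝ) + 1 + n) ^ m := by
          have hm : (m:ℝ) ≤ (n:ℝ) := Nat.cast_le.2 hmn
          have hr : (0:ℝ) ≤ (r:ℝ) := Nat.cast_nonneg r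
          exact abs_descP_le hβ0.le (by linarith) (by linarith)
      _ ≤ ((r:ℝ) + 1 + n) ^ n := pow_le_pow_right₀ hD1 hmn
  have h2 : |x ^ (β - m)| ≤ B ^ ((r:ℝ) + 1 + n) := by
    rw [abs_of_pos (Real.rpow_pos_of_pos hx _)]
    apply rpow_le_of_abs_le hx hB hxB hxB'
    have hm : (m:ℝ) ≤ n := Nat.cast_le.2 hmn
    rw [abs_le]; constructor <;> [linarith; linarith]
  exact mul_le_mul h1 h2 (abs_nonneg _) (by positivity)

set_option maxHeartbeats 800000 in
lemma gInt_hasDerivAt (hα : ∀ s ∈ Set.Ici (0 : ℝ), α s ∈ Set.Ioo (0 : ℝ) 1)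
    (hαc : ContinuousOn α (Set.Ici 0)) (ht : 0 ≤ t) (r m : ℕ) {l : ℝ} (hl : 0 < l) :
    HasDerivAt (gInt α t r m) (gInt α t r (m+1) l) l := by
  set K := Set.univ.pi fun _ : Fin (r+1) => Set.Icc (0:ℝ) t with hK
  set B : ℝ := max (max (3*l/2) ((l/2)⁻¹)) 1 with hBdef
  have hB1 : (1:ℝ) ≤ B := le_max_right _ _
  have hball : ∀ x ∈ Metric.ball l (l/2), l/2 < x ∧ x < 3*l/2 := by
    intro x hx
    rw [Metric.mem_ball, Real.dist_eq, abs_lt] at hx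
    constructor <;> linarith [hx.1, hx.2]
  have hxpos : ∀ x ∈ Metric.ball l (l/2), 0 < x := fun x hx => lt_trans (by linarith) (hball x hx).1
  have key := hasDerivAt_integral_of_dominated_loc_of_deriv_le (μ := volume.restrict K)
    (F := fun x (s : Fin (r+1) → ℝ) => descP m (betaSum α s) * x ^ (betaSum α s - m))
    (F' := fun x (s : Fin (r+1) → ℝ) => descP (m+1) (betaSum α s) * x ^ (betaSum α s - ((m+1:ℕ):ℝ)))
    (x₀ := l) (s := Metric.ball l (l/2))
    (bound := fun _ => ((r:ℝ) + 1 + ((m+1:ℕ):ℝ)) ^ (m+1) * B ^ ((r:ℝ) + 1 + ((m+1:ℕ):ℝ)))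
    (Metric.ball_mem_nhds l (by linarith)) ?_ ?_ ?_ ?_ ?_ ?_
  · exact key.2
  · filter_upwards [Metric.ball_mem_nhds l (by linarith : (0:ℝ) < l/2)] with x hx
    exact ((integrand_contOn hαc ht (hxpos x hx) r m).aestronglyMeasurable (measK r))
  · exact (integrand_contOn hαc ht hl r m).integrableOn_compact (compK r)
  · exact ((integrand_contOn hαc ht hl r (m+1)).aestronglyMeasurable (measK r))
  · filter_upwards [ae_restrict_mem (measK r)] with s hs x hx
    have h1 := hball x hx
    have hx2 : x ≤ B := le_trans h1.2.le (le_trans (le_max_left _ _) (le_max_left _ _))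
    have hx3 : x⁻¹ ≤ B := by
      have h4 : x⁻¹ ≤ (l/2)⁻¹ := by
        apply inv_anti₀ (by linarith) h1.1.le
      exact le_trans h4 (le_trans (le_max_right _ _) (le_max_left _ _))
    rw [Real.norm_eq_abs]
    exact integrand_bound hα ht (le_refl (m+1)) (hxpos x hx) hB1 hx2 hx3 hs
  · haveI : IsFiniteMeasure (volume.restrict K) :=
      ⟨by rw [Measure.restrict_apply_univ]; exact (compK r).measure_lt_top⟩
    exact integrable_const _
  · apply Filter.Eventually.of_forall
    intro s x hx
    have hx0 : 0 < x := hxpos x hx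
    have hd : HasDerivAt (fun y : ℝ => y ^ (betaSum α s - m))
        ((betaSum α s - m) * x ^ (betaSum α s - m - 1)) x :=
      Real.hasDerivAt_rpow_const (Or.inl hx0.ne')
    have := hd.const_mul (descP m (betaSum α s))
    refine this.congr_deriv ?_
    rw [descP_succ]
    have h5 : betaSum α s - ((m+1 : ℕ):ℝ) = betaSum α s - m - 1 := by push_cast; ring
    rw [h5]; ring

lemma volK (ht : 0 ≤ t) (r : ℕ) :
    volume (Set.univ.pi fun _ : Fin (r+1) => Set.Icc (0:ℝ) t) = ENNReal.ofReal t ^ (r+1) := by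
  rw [volume_pi_pi]
  simp [Real.volume_Icc]

lemma gInt_bound (ht : 0 ≤ t) (hα : ∀ s ∈ Set.Ici (0 : ℝ), α s ∈ Set.Ioo (0 : ℝ) 1)
    (hαc : ContinuousOn α (Set.Ici 0)) {r m n : ℕ} (hmn : m ≤ n) {x B : ℝ} (hx : 0 < x)
    (hB : 1 ≤ B) (hxB : x ≤ B) (hxB' : x⁻¹ ≤ B) :
    |gInt α t r m x| ≤ (((r:ℝ) + 1 + n) ^ n * B ^ ((r:ℝ) + 1 + n)) * t ^ (r+1) := by
  have h := norm_setIntegral_le_of_norm_le_const (μ := volume)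
    (s := Set.univ.pi fun _ : Fin (r+1) => Set.Icc (0:ℝ) t)
    (f := fun s : Fin (r+1) → ℝ => descP m (betaSum α s) * x ^ (betaSum α s - m))
    (C := ((r:ℝ) + 1 + n) ^ n * B ^ ((r:ℝ) + 1 + n))
    (by rw [volK ht r]; exact ENNReal.pow_lt_top ENNReal.ofReal_lt_top)
    (fun s hs => by rw [Real.norm_eq_abs]; exact integrand_bound hα ht hmn hx hB hxB hxB' hs)
  rw [Real.norm_eq_abs] at h
  calc |gInt α t r m x| ≤ (((r:ℝ) + 1 + n) ^ n * B ^ ((r:ℝ) + 1 + n)) *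
        (volume (Set.univ.pi fun _ : Fin (r+1) => Set.Icc (0:ℝ) t)).toReal := h
    _ = (((r:ℝ) + 1 + n) ^ n * B ^ ((r:ℝ) + 1 + n)) * t ^ (r+1) := by
        rw [volK ht r, ENNReal.toReal_pow, ENNReal.toReal_ofReal ht]

lemma pow_le_factorial_mul_exp (k : ℕ) {y : ℝ} (hy : 0 ≤ y) :
    y ^ k ≤ (k.factorial : ℝ) * Real.exp y := by
  have h1 : y ^ k / (k.factorial : ℝ) ≤ ∑ i ∈ Finset.range (k+1), y ^ i / (i.factorial : ℝ) :=
    Finset.single_le_sum (f := fun i => y ^ i / (i.factorial : ℝ))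
      (fun i _ => by positivity) (Finset.self_mem_range_succ k)
  have h2 := Real.sum_le_exp_of_nonneg hy (k+1)
  have hk : (0:ℝ) < (k.factorial : ℝ) := by exact_mod_cast k.factorial_pos
  rw [div_le_iff₀ hk] at *
  calc y ^ k ≤ (∑ i ∈ Finset.range (k+1), y ^ i / (i.factorial : ℝ)) * (k.factorial:ℝ) := by
        rw [← div_le_iff₀ hk] at *; exact h1
    _ ≤ Real.exp y * (k.factorial:ℝ) := by
        apply mul_le_mul_of_nonneg_right h2 hk.le
    _ = (k.factorial : ℝ) * Real.exp y := mul_comm _ _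

lemma summable_u (ht : 0 ≤ t) {B : ℝ} (hB : 1 ≤ B) (n : ℕ) :
    Summable (fun r : ℕ =>
      (((r:ℝ) + 1 + n) ^ n * B ^ ((r:ℝ) + 1 + n)) * t ^ (r+1) / ((r+1).factorial : ℝ)) := by
  have hB0 : (0:ℝ) < B := lt_of_lt_of_le one_pos hB
  set y : ℝ := t * B * Real.exp 1 with hy
  have hyn : 0 ≤ y := by positivity
  set C : ℝ := (n.factorial : ℝ) * Real.exp (1+n) * B ^ n with hC
  have hsum : Summable (fun r : ℕ => C * (y ^ (r+1) / ((r+1).factorial : ℝ))) := by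
    apply Summable.mul_left
    exact (summable_nat_add_iff 1).2 (Real.summable_pow_div_factorial y)
  apply Summable.of_nonneg_of_le _ _ hsum
  · intro r
    positivity
  · intro r
    have h1 : B ^ ((r:ℝ) + 1 + n) = B ^ (r+1) * B ^ n := by
      rw [← Real.rpow_natCast B (r+1), ← Real.rpow_natCast B n, ← Real.rpow_add hB0]
      push_cast; ring_nf
    have h2 : ((r:ℝ) + 1 + n) ^ n ≤ (n.factorial : ℝ) * (Real.exp (1+n) * Real.exp 1 ^ r) := by
      calc ((r:ℝ) + 1 + n) ^ n ≤ (n.factorial : ℝ) * Real.exp ((r:ℝ) + 1 + n) :=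
            pow_le_factorial_mul_exp n (by positivity)
        _ = (n.factorial : ℝ) * (Real.exp (1+n) * Real.exp 1 ^ r) := by
            rw [show (r:ℝ) + 1 + n = (1 + n) + r by ring, Real.exp_add, ← Real.exp_nat_mul]
            ring_nf
    have hf : (0:ℝ) < ((r+1).factorial : ℝ) := by exact_mod_cast (r+1).factorial_pos
    rw [show C * (y ^ (r+1) / ((r+1).factorial:ℝ)) = C * y ^ (r+1) / ((r+1).factorial:ℝ) by ring]
    apply div_le_div_of_nonneg_right ?_ hf.le
    rw [h1]
    calc ((r:ℝ) + 1 + n) ^ n * (B ^ (r+1) * B ^ n) * t ^ (r+1)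
        ≤ (n.factorial : ℝ) * (Real.exp (1+n) * Real.exp 1 ^ r) * (B ^ (r+1) * B ^ n) * t ^ (r+1) := by
          apply mul_le_mul_of_nonneg_right (mul_le_mul_of_nonneg_right h2 (by positivity)) (by positivity)
      _ ≤ C * y ^ (r+1) := by
          rw [hC, hy]
          have he : (0:ℝ) < Real.exp 1 := Real.exp_pos 1
          have : Real.exp 1 ^ r ≤ Real.exp 1 ^ (r+1) :=
            pow_le_pow_right₀ (Real.one_le_exp (by norm_num)) (Nat.le_succ r)
          calc (n.factorial : ℝ) * (Real.exp (1+n) * Real.exp 1 ^ r) * (B ^ (r+1) * B ^ n) * t ^ (r+1)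
              ≤ (n.factorial : ℝ) * (Real.exp (1+n) * Real.exp 1 ^ (r+1)) * (B ^ (r+1) * B ^ n) * t ^ (r+1) := by
                have hfn : (0:ℝ) ≤ (n.factorial:ℝ) := by positivity
                apply mul_le_mul_of_nonneg_right _ (by positivity)
                apply mul_le_mul_of_nonneg_right _ (by positivity)
                apply mul_le_mul_of_nonneg_left _ hfn
                exact mul_le_mul_of_nonneg_left this (Real.exp_pos _).le
            _ = C * y ^ (r+1) := by rw [hC, hy, mul_pow, mul_pow]; ring

lemma gInt_zero (ht : 0 ≤ t) {l : ℝ} (hl : 0 < l) (r : ℕ) :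
    gInt α t r 0 l = (∫ τ in Set.Icc (0:ℝ) t, l ^ α τ) ^ (r+1) := by
  have h0 : gInt α t r 0 l
      = ∫ s : Fin (r+1) → ℝ in Set.univ.pi fun _ => Set.Icc (0:ℝ) t, l ^ betaSum α s := by
    unfold gInt
    congr 1
    funext s
    rw [descP_zero]
    push_cast
    rw [sub_zero, one_mul]
  rw [h0, ← integral_indicator (measK r)]
  have hind : ∀ s : Fin (r+1) → ℝ,
      (Set.univ.pi fun _ : Fin (r+1) => Set.Icc (0:ℝ) t).indicator
        (fun s => l ^ betaSum α s) s
      = ∏ j, (Set.Icc (0:ℝ) t).indicator (fun y => l ^ α y) (s j) := by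
    intro s
    by_cases hs : s ∈ Set.univ.pi fun _ : Fin (r+1) => Set.Icc (0:ℝ) t
    · rw [Set.indicator_of_mem hs]
      have : ∀ j : Fin (r+1), (Set.Icc (0:ℝ) t).indicator (fun y => l ^ α y) (s j)
          = l ^ α (s j) := fun j => Set.indicator_of_mem (hs j trivial) _
      simp only [this]
      rw [betaSum, Real.rpow_sum_of_pos hl]
    · rw [Set.indicator_of_notMem hs]
      rw [Set.mem_pi] at hs
      push_neg at hs
      obtain ⟨j, _, hj⟩ := hs
      exact (Finset.prod_eq_zero (Finset.mem_univ j) (Set.indicator_of_notMem hj _)).symm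
  rw [funext hind]
  rw [MeasureTheory.volume_pi, MeasureTheory.integral_fintype_prod_eq_pow (ι := Fin (r+1))
    (fun y : ℝ => (Set.Icc (0:ℝ) t).indicator (fun y => l ^ α y) y)]
  rw [integral_indicator measurableSet_Icc]
  simp

lemma exp_series_eq (ht : 0 ≤ t) {l : ℝ} (hl : 0 < l) :
    Real.exp (-(∫ τ in (0:ℝ)..t, l ^ α τ))
      = 1 + ∑' r : ℕ, (((-1:ℝ)^(r+1)) / ((r+1).factorial : ℝ)) * gInt α t r 0 l := by
  set I : ℝ := ∫ τ in (0:ℝ)..t, l ^ α τ with hI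
  have hIicc : I = ∫ τ in Set.Icc (0:ℝ) t, l ^ α τ := by
    rw [hI, intervalIntegral.integral_of_le ht, integral_Icc_eq_integral_Ioc]
  have h1 : Real.exp (-I) = ∑' k : ℕ, (-I) ^ k / (k.factorial : ℝ) := by
    rw [Real.exp_eq_exp_ℝ, NormedSpace.exp_eq_tsum_div]
  rw [h1, (Real.summable_pow_div_factorial (-I)).tsum_eq_zero_add]
  have h3 : ∀ r : ℕ, (-I) ^ (r+1) / (((r+1).factorial : ℕ) : ℝ)
      = (((-1:ℝ)^(r+1)) / ((r+1).factorial : ℝ)) * gInt α t r 0 l := by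
    intro r
    rw [gInt_zero ht hl r, ← hIicc, neg_pow]
    ring
  rw [tsum_congr h3]
  norm_num

end main

set_option maxHeartbeats 1000000 in
theorem stmt_10 (α : ℝ → ℝ) (hα : ∀ s ∈ Set.Ici (0 : ℝ), α s ∈ Set.Ioo (0 : ℝ) 1)
    (hαc : ContinuousOn α (Set.Ici 0)) (t : ℝ) (ht : 0 < t)
    (n : ℕ) (hn : 1 ≤ n) (lam : ℝ) (hlam : 0 < lam) :
    ∑' r : ℕ, ((-1 : ℝ) ^ (n + (r + 1)) / ((r + 1).factorial : ℝ)) *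
        ∫ s : Fin (r + 1) → ℝ in Set.univ.pi (fun _ => Set.Icc (0 : ℝ) t),
          lam ^ betaSum α s * gbinom (betaSum α s) n
      = ((-lam) ^ n / (n.factorial : ℝ)) *
          iteratedDeriv n (fun l : ℝ => Real.exp (-(∫ τ in (0 : ℝ)..t, l ^ α τ))) lam := by
  have ht0 : (0:ℝ) ≤ t := ht.le
  set U : Set ℝ := Set.Ioo (lam/2) (lam+1) with hU
  have hUopen : IsOpen U := isOpen_Ioo
  have hUconn : IsPreconnected U := isPreconnected_Ioo
  have hlamU : lam ∈ U := ⟨by linarith, by linarith⟩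
  set B : ℝ := max (max (lam+1) ((lam/2)⁻¹)) 1 with hB
  have hB1 : (1:ℝ) ≤ B := le_max_right _ _
  have hUpos : ∀ y ∈ U, 0 < y := fun y hy => lt_trans (by linarith) hy.1
  have hyB : ∀ y ∈ U, y ≤ B := fun y hy =>
    le_trans hy.2.le (le_trans (le_max_left _ _) (le_max_left _ _))
  have hyB' : ∀ y ∈ U, y⁻¹ ≤ B := by
    intro y hy
    have : y⁻¹ ≤ (lam/2)⁻¹ := inv_anti₀ (by linarith) hy.1.le
    exact le_trans this (le_trans (le_max_right _ _) (le_max_left _ _))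
  set c : ℕ → ℝ := fun r => (-1:ℝ)^(r+1) / ((r+1).factorial : ℝ) with hc
  set u : ℕ → ℝ := fun r =>
    (((r:ℝ) + 1 + n) ^ n * B ^ ((r:ℝ) + 1 + n)) * t ^ (r+1) / ((r+1).factorial : ℝ) with hu
  have husum : Summable u := summable_u ht0 hB1 n
  have hcabs : ∀ r : ℕ, |c r| = 1 / ((r+1).factorial : ℝ) := by
    intro r
    rw [hc]
    rw [abs_div, abs_pow, abs_neg, abs_one, one_pow, abs_of_pos]
    exact_mod_cast (r+1).factorial_pos
  have hbound : ∀ m : ℕ, m ≤ n → ∀ r : ℕ, ∀ y ∈ U, ‖c r * gInt α t r m y‖ ≤ u r := by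
    intro m hm r y hy
    rw [Real.norm_eq_abs, abs_mul, hcabs]
    have h1 := gInt_bound ht0 hα hαc hm (hUpos y hy) hB1 (hyB y hy) (hyB' y hy) (r := r)
    calc (1 / ((r+1).factorial : ℝ)) * |gInt α t r m y|
        ≤ (1 / ((r+1).factorial : ℝ)) * ((((r:ℝ) + 1 + n) ^ n * B ^ ((r:ℝ) + 1 + n)) * t ^ (r+1)) :=
          mul_le_mul_of_nonneg_left h1 (by positivity)
      _ = u r := by rw [hu]; ring
  have hsummand : ∀ m : ℕ, m ≤ n → ∀ y ∈ U, Summable (fun r => c r * gInt α t r m y) :=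
    fun m hm y hy => Summable.of_norm_bounded husum (fun r => hbound m hm r y hy)
  have hstep : ∀ m : ℕ, m + 1 ≤ n → ∀ y ∈ U,
      HasDerivAt (fun z => ∑' r : ℕ, c r * gInt α t r m z)
        (∑' r : ℕ, c r * gInt α t r (m+1) y) y := by
    intro m hm y hy
    apply hasDerivAt_tsum_of_isPreconnected husum hUopen hUconn
      (fun r z hz => (gInt_hasDerivAt hα hαc ht0 r m (hUpos z hz)).const_mul (c r))
      (fun r z hz => hbound (m+1) hm r z hz) hlamU
      (hsummand m (by omega) lam hlamU) hy
  set F : ℝ → ℝ := fun l => Real.exp (-(∫ τ in (0:ℝ)..t, l ^ α τ)) with hF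
  have hFG : Set.EqOn F (fun z => 1 + ∑' r : ℕ, c r * gInt α t r 0 z) U := by
    intro l hl
    exact exp_series_eq ht0 (hUpos l hl)
  have key : ∀ m : ℕ, 1 ≤ m → m ≤ n → ∀ l ∈ U,
      iteratedDeriv m F l = ∑' r : ℕ, c r * gInt α t r m l := by
    intro m
    induction m with
    | zero => omega
    | succ m ih =>
      intro _ hmn l hl
      rw [iteratedDeriv_succ]
      rcases Nat.eq_zero_or_pos m with hm0 | hm1
      · subst hm0
        rw [iteratedDeriv_zero]
        have he : F =ᶠ[nhds l] (fun z => 1 + ∑' r : ℕ, c r * gInt α t r 0 z) :=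
          Filter.eventuallyEq_of_mem (hUopen.mem_nhds hl) hFG
        rw [he.deriv_eq]
        exact (((hstep 0 (by omega) l hl)).const_add 1).deriv
      · have he : iteratedDeriv m F =ᶠ[nhds l] (fun z => ∑' r : ℕ, c r * gInt α t r m z) :=
          Filter.eventuallyEq_of_mem (hUopen.mem_nhds hl)
            (fun z hz => ih hm1 (by omega) z hz)
        rw [he.deriv_eq]
        exact (hstep m hmn l hl).deriv
  have hterm : ∀ r : ℕ, ((-1 : ℝ) ^ (n + (r + 1)) / ((r + 1).factorial : ℝ)) *
        (∫ s : Fin (r + 1) → ℝ in Set.univ.pi (fun _ => Set.Icc (0 : ℝ) t),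
          lam ^ betaSum α s * gbinom (betaSum α s) n)
      = ((-1:ℝ)^n * lam^n / (n.factorial : ℝ)) * (c r * gInt α t r n lam) := by
    intro r
    have hfun : ∀ s : Fin (r+1) → ℝ, lam ^ betaSum α s * gbinom (betaSum α s) n
        = (lam^n/(n.factorial:ℝ)) * (descP n (betaSum α s) * lam ^ (betaSum α s - n)) := by
      intro s
      have h2 : lam ^ betaSum α s = lam ^ (n:ℕ) * lam ^ (betaSum α s - n) := by
        rw [← Real.rpow_natCast lam n, ← Real.rpow_add hlam]
        ring_nf
      have hd : gbinom (betaSum α s) n = descP n (betaSum α s) / (n.factorial : ℝ) := rfl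
      rw [h2, hd]
      ring
    have hint : (∫ s : Fin (r + 1) → ℝ in Set.univ.pi (fun _ => Set.Icc (0 : ℝ) t),
          lam ^ betaSum α s * gbinom (betaSum α s) n)
        = (lam^n/(n.factorial:ℝ)) * gInt α t r n lam := by
      simp only [hfun]
      rw [integral_const_mul]
      rfl
    rw [hint, hc]
    rw [pow_add]
    ring
  rw [tsum_congr hterm, tsum_mul_left]
  rw [key n hn le_rfl lam hlamU, neg_pow]
  ring
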